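/- Let G be a finite connected weighted graph and T a minimal spanning tree of G. For any r ∈ ℝ, the subgraph T_r of T consisting of edges with weight at most r is a minimal spanning forest of the subgraph G_r of G consisting of edges with weight at most r; in particular T_r and G_r have the same partition of the vertex set into connected components. -/

import Mathlib

/-- Total weight of a graph: sum of edge weights over its edge set. -/
noncomputable def totalWeight {V : Type*} (w : Sym2 V → ℝ) (G : SimpleGraph V) : ℝ :=
  ∑ᶠ e ∈ G.edgeSet, w e

/-- `F` is a minimal spanning forest of `G` (with weights `w`): an acyclic subgraph with
the same connected components as `G` whose total weight is minimal among all such. -/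
def IsMSF {V : Type*} (w : Sym2 V → ℝ) (F G : SimpleGraph V) : Prop :=
  F ≤ G ∧ F.IsAcyclic ∧ (∀ x y : V, F.Reachable x y ↔ G.Reachable x y) ∧
    ∀ F' : SimpleGraph V, F' ≤ G → F'.IsAcyclic →
      (∀ x y : V, F'.Reachable x y ↔ G.Reachable x y) →
      totalWeight w F ≤ totalWeight w F'

open SimpleGraph

section Helpers

variable {V : Type*}

lemma my_totalWeight_eq_sum (w : Sym2 V → ℝ) (F : SimpleGraph V) (s : Finset (Sym2 V))
    (h : F.edgeSet = ↑s) : totalWeight w F = ∑ e ∈ s, w e := by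
  rw [totalWeight, h, finsum_mem_coe_finset]

lemma my_acyclic_mono {F G : SimpleGraph V} (h : F ≤ G) (hG : G.IsAcyclic) : F.IsAcyclic := by
  intro v c hc
  exact hG (c.transfer G (fun e he => edgeSet_mono h (c.edges_subset_edgeSet he)))
    (hc.transfer _)

lemma my_reach_lift {X Y : SimpleGraph V} (h : ∀ p q : V, X.Adj p q → Y.Reachable p q)
    {u v : V} (hr : X.Reachable u v) : Y.Reachable u v := by
  obtain ⟨p⟩ := hr
  induction p with
  | nil => exact Reachable.refl _
  | cons ha _ ih => exact (h _ _ ha).trans ih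

lemma my_reach_invariant {X : SimpleGraph V} {P : V → Prop}
    (h : ∀ p q : V, X.Adj p q → (P p ↔ P q)) {u v : V} (hr : X.Reachable u v) : P u ↔ P v := by
  obtain ⟨p⟩ := hr
  induction p with
  | nil => exact Iff.rfl
  | cons ha _ ih => exact (h _ _ ha).trans ih

lemma my_two_components {T : SimpleGraph V} (hT : T.Preconnected) (a b z : V) :
    (T \ edge a b).Reachable z a ∨ (T \ edge a b).Reachable z b := by
  set D := T \ edge a b with hD
  have key : ∀ p q : V, T.Adj p q →
      ((D.Reachable p a ∨ D.Reachable p b) ↔ (D.Reachable q a ∨ D.Reachable q b)) := by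
    intro p q hpq
    by_cases he : s(p, q) = s(a, b)
    · rw [Sym2.eq_iff] at he
      rcases he with ⟨rfl, rfl⟩ | ⟨rfl, rfl⟩
      · exact iff_of_true (Or.inl (Reachable.refl _)) (Or.inr (Reachable.refl _))
      · exact iff_of_true (Or.inr (Reachable.refl _)) (Or.inl (Reachable.refl _))
    · have hDpq : D.Adj p q := by
        rw [hD, sdiff_adj, edge_adj]
        refine ⟨hpq, ?_⟩
        rintro ⟨(⟨rfl, rfl⟩ | ⟨rfl, rfl⟩), -⟩
        · exact he rfl
        · exact he (Sym2.eq_swap)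
      constructor
      · rintro (h | h)
        · exact Or.inl (hDpq.symm.reachable.trans h)
        · exact Or.inr (hDpq.symm.reachable.trans h)
      · rintro (h | h)
        · exact Or.inl (hDpq.reachable.trans h)
        · exact Or.inr (hDpq.reachable.trans h)
  exact (my_reach_invariant key (hT z a)).mpr (Or.inl (Reachable.refl a))

lemma my_isAcyclic_sup_edge {D : SimpleGraph V} {x y : V} (hD : D.IsAcyclic)
    (hxy : ¬D.Reachable x y) : (D ⊔ edge x y).IsAcyclic := by
  have hne : x ≠ y := by rintro rfl; exact hxy (Reachable.refl x)
  have hle : ((D ⊔ edge x y) \ fromEdgeSet {s(x, y)}) ≤ D := by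
    intro p q hpq
    rw [sdiff_adj, fromEdgeSet_adj] at hpq
    obtain ⟨hpq1, hpq2⟩ := hpq
    cases hpq1 with
    | inl h => exact h
    | inr h =>
        exfalso
        rw [edge_adj] at h
        apply hpq2
        refine ⟨?_, h.2⟩
        rcases h.1 with ⟨rfl, rfl⟩ | ⟨rfl, rfl⟩
        · exact rfl
        · exact Sym2.eq_swap
  have hbridge : (D ⊔ edge x y).IsBridge s(x, y) := by
    rw [isBridge_iff]
    intro hreach
    exact hxy (hreach.mono hle)
  intro v c hc
  have hmem : s(x, y) ∉ c.edges :=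
    hbridge.notMem_edges_of_isCycle hc
  have hsub : ∀ e ∈ c.edges, e ∈ D.edgeSet := by
    intro e he
    have h := c.edges_subset_edgeSet he
    rw [edgeSet_sup, edge_edgeSet_of_ne hne] at h
    rcases h with h | h
    · exact h
    · exact absurd (h ▸ he) hmem
  exact hD (c.transfer D hsub) (hc.transfer hsub)

lemma my_swap_contra [Fintype V] (G : SimpleGraph V) (w : Sym2 V → ℝ) (T : SimpleGraph V)
    (hTG : T ≤ G) (hTconn : T.Connected) (hTacyc : T.IsAcyclic)
    (hTmin : ∀ T' : SimpleGraph V, T' ≤ G → T'.Connected → T'.IsAcyclic →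
      totalWeight w T ≤ totalWeight w T')
    {a b u v : V} (hab : T.Adj a b) (huv : G.Adj u v) (huvT : ¬T.Adj u v)
    (hw : w s(u, v) < w s(a, b))
    (hDuv : ¬(T \ edge a b).Reachable u v) : False := by
  classical
  set D := T \ edge a b with hD
  have hDle : D ≤ T := sdiff_le
  have hDacyc : D.IsAcyclic := my_acyclic_mono hDle hTacyc
  have hne : u ≠ v := huv.ne
  set T' := D ⊔ edge u v with hT'
  have hT'G : T' ≤ G := by
    refine sup_le (hDle.trans hTG) ?_
    intro p q h
    rw [edge_adj] at h
    rcases h.1 with ⟨rfl, rfl⟩ | ⟨rfl, rfl⟩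
    · exact huv
    · exact huv.symm
  have htwo := my_two_components hTconn.preconnected a b
  have hsides : (D.Reachable u a ∧ D.Reachable v b) ∨ (D.Reachable u b ∧ D.Reachable v a) := by
    rcases htwo u with hu | hu <;> rcases htwo v with hv | hv
    · exact absurd (hu.trans hv.symm) hDuv
    · exact Or.inl ⟨hu, hv⟩
    · exact Or.inr ⟨hu, hv⟩
    · exact absurd (hu.trans hv.symm) hDuv
  have hadjuv : T'.Adj u v := Or.inr ((edge_adj u v u v).mpr ⟨Or.inl ⟨rfl, rfl⟩, hne⟩)
  have hreach_a : ∀ z, T'.Reachable z a := by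
    have hba : T'.Reachable b a := by
      rcases hsides with ⟨hua, hvb⟩ | ⟨hub, hva⟩
      · exact ((hvb.mono (le_sup_left : D ≤ T')).symm.trans
          (hadjuv.symm.reachable.trans (hua.mono le_sup_left)))
      · exact ((hub.mono (le_sup_left : D ≤ T')).symm.trans
          (hadjuv.reachable.trans (hva.mono le_sup_left)))
    intro z
    rcases htwo z with h | h
    · exact h.mono le_sup_left
    · exact (h.mono le_sup_left).trans hba
  have hT'conn : T'.Connected := by
    haveI := hTconn.nonempty
    exact ⟨fun z z' => (hreach_a z).trans (hreach_a z').symm⟩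
  have hT'acyc : T'.IsAcyclic := my_isAcyclic_sup_edge hDacyc hDuv
  have hsab : s(a, b) ∈ T.edgeSet := hab
  have hsuv : s(u, v) ∉ T.edgeSet := huvT
  have hfin : T.edgeSet.Finite := T.edgeSet.toFinite
  set s : Finset (Sym2 V) := hfin.toFinset with hs
  have hTsum : totalWeight w T = ∑ e ∈ s, w e :=
    my_totalWeight_eq_sum w T s (hfin.coe_toFinset).symm
  have hT'edge : T'.edgeSet = ↑(insert s(u, v) (s.erase s(a, b))) := by
    ext e
    simp only [hT', hD, edgeSet_sup, edgeSet_sdiff, edge_edgeSet_of_ne hne,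
      edge_edgeSet_of_ne hab.ne, Finset.coe_insert, Finset.coe_erase, Set.mem_insert_iff,
      hs, Set.Finite.coe_toFinset, Set.mem_union, Set.mem_diff,
      Set.mem_singleton_iff]
    tauto
  have hT'sum : totalWeight w T' = ∑ e ∈ insert s(u, v) (s.erase s(a, b)), w e :=
    my_totalWeight_eq_sum w T' _ hT'edge
  have h1 : s(u, v) ∉ s.erase s(a, b) := by
    intro h
    exact hsuv (hfin.mem_toFinset.mp (Finset.mem_of_mem_erase h))
  have h2 : w s(a, b) + ∑ e ∈ s.erase s(a, b), w e = ∑ e ∈ s, w e :=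
    Finset.add_sum_erase s w (hfin.mem_toFinset.mpr hsab)
  have hmin := hTmin T' hT'G hT'conn hT'acyc
  rw [hTsum, hT'sum, Finset.sum_insert h1, ← h2] at hmin
  linarith

end Helpers

/-- If T is a minimal spanning tree of a finite connected weighted graph G, then for any
r the subgraph T_r of edges of T of weight at most r is a minimal spanning forest of the
subgraph G_r of edges of G of weight at most r; in particular T_r and G_r have the same
connected components. -/
theorem stmt18 {V : Type*} [Fintype V] (G : SimpleGraph V) (w : Sym2 V → ℝ)
    (hG : G.Connected)
    (T : SimpleGraph V) (hTG : T ≤ G) (hTconn : T.Connected) (hTacyc : T.IsAcyclic)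
    (hTmin : ∀ T' : SimpleGraph V, T' ≤ G → T'.Connected → T'.IsAcyclic →
      totalWeight w T ≤ totalWeight w T')
    (r : ℝ) (Gr Tr : SimpleGraph V)
    (hGr : ∀ x y : V, Gr.Adj x y ↔ G.Adj x y ∧ w s(x, y) ≤ r)
    (hTr : ∀ x y : V, Tr.Adj x y ↔ T.Adj x y ∧ w s(x, y) ≤ r) :
    IsMSF w Tr Gr ∧ ∀ x y : V, Tr.Reachable x y ↔ Gr.Reachable x y := by
  classical
  have hTrT : Tr ≤ T := fun {x y} h => ((hTr x y).mp h).1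
  have hTrGr : Tr ≤ Gr := by
    intro x y h
    obtain ⟨h1, h2⟩ := (hTr x y).mp h
    exact (hGr x y).mpr ⟨hTG h1, h2⟩
  have hGrG : Gr ≤ G := fun {x y} h => ((hGr x y).mp h).1
  have hTracyc : Tr.IsAcyclic := my_acyclic_mono hTrT hTacyc
  -- key: light G-edges have Tr-connected endpoints
  have hlight : ∀ u v : V, G.Adj u v → w s(u, v) ≤ r → Tr.Reachable u v := by
    intro u v huv hwle
    by_contra hnr
    obtain ⟨p⟩ := hTconn u v
    set q : T.Path u v := p.toPath with hq
    have hheavy : ∃ e ∈ (q : T.Walk u v).edges, ¬w e ≤ r := by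
      by_contra h
      push_neg at h
      apply hnr
      have hsub : ∀ e ∈ (q : T.Walk u v).edges, e ∈ Tr.edgeSet := by
        intro e he
        have hT := (q : T.Walk u v).edges_subset_edgeSet he
        induction e using Sym2.ind with
        | _ x y =>
          rw [mem_edgeSet] at hT ⊢
          exact (hTr x y).mpr ⟨hT, h _ he⟩
      exact ⟨(q : T.Walk u v).transfer Tr hsub⟩
    obtain ⟨e, he, hwe⟩ := hheavy
    revert he hwe
    induction e using Sym2.ind with
    | _ a b =>
      intro he hwe
      have hTab : T.Adj a b := (q : T.Walk u v).adj_of_mem_edges he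
      have hDuv : ¬(T \ edge a b).Reachable u v := by
        rintro ⟨c⟩
        have hsub : ∀ e' ∈ c.edges, e' ∈ T.edgeSet := fun e' he' =>
          edgeSet_mono sdiff_le (c.edges_subset_edgeSet he')
        set c' := c.transfer T hsub with hc'
        have huniq : q = c'.toPath := hTacyc.path_unique q c'.toPath
        have hmem : s(a, b) ∈ c.edges := by
          have h1 : s(a, b) ∈ (c'.toPath : T.Walk u v).edges := by rw [← huniq]; exact he
          have h2 := c'.edges_toPath_subset h1
          rwa [Walk.edges_transfer] at h2
        have hmem2 := c.edges_subset_edgeSet hmem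
        rw [edgeSet_sdiff, edge_edgeSet_of_ne hTab.ne] at hmem2
        exact hmem2.2 rfl
      have huvT : ¬T.Adj u v := fun h => hnr ((hTr u v).mpr ⟨h, hwle⟩).reachable
      exact my_swap_contra G w T hTG hTconn hTacyc hTmin hTab huv huvT
        (lt_of_le_of_lt hwle (not_le.mp hwe)) hDuv
  have hreach : ∀ x y : V, Tr.Reachable x y ↔ Gr.Reachable x y := by
    intro x y
    constructor
    · exact fun h => h.mono hTrGr
    · intro h
      refine my_reach_lift ?_ h
      intro p q hpq
      obtain ⟨h1, h2⟩ := (hGr p q).mp hpq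
      exact hlight p q h1 h2
  refine ⟨⟨hTrGr, hTracyc, hreach, ?_⟩, hreach⟩
  -- minimality
  intro F' hF'Gr hF'acyc hF'reach
  set H := T \ Tr with hH
  have hHadj : ∀ p q : V, H.Adj p q ↔ T.Adj p q ∧ ¬w s(p, q) ≤ r := by
    intro p q
    rw [hH, sdiff_adj, hTr]
    constructor
    · rintro ⟨h1, h2⟩; exact ⟨h1, fun h => h2 ⟨h1, h⟩⟩
    · rintro ⟨h1, h2⟩; exact ⟨h1, fun h => h2 h.2⟩
  set T3 := F' ⊔ H with hT3
  have hT3G : T3 ≤ G := sup_le (hF'Gr.trans hGrG) ((sdiff_le : H ≤ T).trans hTG)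
  have hT3conn : T3.Connected := by
    haveI := hTconn.nonempty
    refine ⟨fun z z' => my_reach_lift ?_ (hTconn z z')⟩
    intro p q hpq
    by_cases hwl : w s(p, q) ≤ r
    · have : F'.Reachable p q :=
        (hF'reach p q).mpr ((hreach p q).mp ((hTr p q).mpr ⟨hpq, hwl⟩).reachable)
      exact this.mono le_sup_left
    · exact (Adj.reachable (by exact Or.inr ((hHadj p q).mpr ⟨hpq, hwl⟩) : T3.Adj p q))
  have hbridge : ∀ c d : V, H.Adj c d → T3.IsBridge s(c, d) := by
    intro c d hcd
    obtain ⟨hTcd, hwcd'⟩ := (hHadj c d).mp hcd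
    have hwcd : r < w s(c, d) := not_le.mp hwcd'
    rw [isBridge_iff]
    intro hre
    set D := T \ edge c d with hD
    have hDbr : ¬D.Reachable c d :=
      ((isAcyclic_iff_forall_adj_isBridge.mp hTacyc) hTcd)
    have hkey : ∀ p q : V, (T3 \ fromEdgeSet {s(c, d)}).Adj p q →
        (D.Reachable c p ↔ D.Reachable c q) := by
      intro p q hpq
      rw [sdiff_adj, fromEdgeSet_adj] at hpq
      obtain ⟨hpq3, hnot⟩ := hpq
      have hpqne : p ≠ q := by
        cases hpq3 with
        | inl h => exact h.ne
        | inr h => exact h.ne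
      have hsne : s(p, q) ≠ s(c, d) := fun h => hnot ⟨by rw [h]; rfl, hpqne⟩
      have hstep : D.Adj p q → (D.Reachable c p ↔ D.Reachable c q) := fun hDpq =>
        ⟨fun h => h.trans hDpq.reachable, fun h => h.trans hDpq.symm.reachable⟩
      cases hpq3 with
      | inr hHpq =>
        refine hstep ?_
        rw [hD, sdiff_adj, edge_adj]
        refine ⟨((hHadj p q).mp hHpq).1, ?_⟩
        rintro ⟨(⟨rfl, rfl⟩ | ⟨rfl, rfl⟩), -⟩
        · exact hsne rfl
        · exact hsne Sym2.eq_swap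
      | inl hF =>
        have hGrpq : Gr.Adj p q := hF'Gr hF
        obtain ⟨hGpq, hwpq⟩ := (hGr p q).mp hGrpq
        by_cases hTpq : T.Adj p q
        · refine hstep ?_
          rw [hD, sdiff_adj, edge_adj]
          refine ⟨hTpq, ?_⟩
          rintro ⟨(⟨rfl, rfl⟩ | ⟨rfl, rfl⟩), -⟩
          · exact absurd hwpq (not_le.mpr hwcd)
          · rw [Sym2.eq_swap] at hwpq; exact absurd hwpq (not_le.mpr hwcd)
        · constructor
          · intro hp
            by_contra hq
            exact my_swap_contra G w T hTG hTconn hTacyc hTmin hTcd hGpq hTpq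
              (lt_of_le_of_lt hwpq hwcd) (fun h => hq (hp.trans h))
          · intro hq
            by_contra hp
            refine my_swap_contra G w T hTG hTconn hTacyc hTmin hTcd hGpq.symm
              (fun h => hTpq h.symm) ?_ (fun h => hp (hq.trans h))
            rw [Sym2.eq_swap]
            exact lt_of_le_of_lt hwpq hwcd
    have := (my_reach_invariant hkey hre).mp (Reachable.refl c)
    exact hDbr this
  have hT3acyc : T3.IsAcyclic := by
    intro z c hc
    have hsub : ∀ e ∈ c.edges, e ∈ F'.edgeSet := by
      intro e he
      have hmemT3 := c.edges_subset_edgeSet he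
      rw [hT3, edgeSet_sup] at hmemT3
      rcases hmemT3 with h | h
      · exact h
      · exfalso
        revert h he
        induction e using Sym2.ind with
        | _ p q =>
          intro he h
          rw [mem_edgeSet] at h
          exact (hbridge p q h).notMem_edges_of_isCycle hc he
    exact hF'acyc (c.transfer F' hsub) (hc.transfer hsub)
  have hmin := hTmin T3 hT3G hT3conn hT3acyc
  -- weight bookkeeping
  have hTrfin : Tr.edgeSet.Finite := Tr.edgeSet.toFinite
  have hHfin : H.edgeSet.Finite := H.edgeSet.toFinite
  have hF'fin : F'.edgeSet.Finite := F'.edgeSet.toFinite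
  set sTr := hTrfin.toFinset with hsTr
  set sH := hHfin.toFinset with hsH
  set sF := hF'fin.toFinset with hsF
  have hlightTr : ∀ e ∈ sTr, w e ≤ r := by
    intro e he
    rw [hsTr, Set.Finite.mem_toFinset] at he
    revert he
    induction e using Sym2.ind with
    | _ p q => intro he; exact ((hTr p q).mp he).2
  have hlightF : ∀ e ∈ sF, w e ≤ r := by
    intro e he
    rw [hsF, Set.Finite.mem_toFinset] at he
    revert he
    induction e using Sym2.ind with
    | _ p q => intro he; exact ((hGr p q).mp (hF'Gr he)).2
  have hheavyH : ∀ e ∈ sH, ¬w e ≤ r := by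
    intro e he
    rw [hsH, Set.Finite.mem_toFinset] at he
    revert he
    induction e using Sym2.ind with
    | _ p q => intro he; exact ((hHadj p q).mp he).2
  have hdisj1 : Disjoint sTr sH := Finset.disjoint_left.mpr
    (fun e he1 he2 => hheavyH e he2 (hlightTr e he1))
  have hdisj2 : Disjoint sF sH := Finset.disjoint_left.mpr
    (fun e he1 he2 => hheavyH e he2 (hlightF e he1))
  have hTedge : T.edgeSet = ↑(sTr ∪ sH) := by
    ext e
    rw [Finset.coe_union, hsTr, hsH, Set.Finite.coe_toFinset, Set.Finite.coe_toFinset,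
      Set.mem_union]
    induction e using Sym2.ind with
    | _ p q =>
      rw [mem_edgeSet, mem_edgeSet, mem_edgeSet, hHadj, hTr]
      constructor
      · intro h
        by_cases hwl : w s(p, q) ≤ r
        · exact Or.inl ⟨h, hwl⟩
        · exact Or.inr ⟨h, hwl⟩
      · rintro (⟨h, -⟩ | ⟨h, -⟩) <;> exact h
  have hT3edge : T3.edgeSet = ↑(sF ∪ sH) := by
    rw [hT3, edgeSet_sup, Finset.coe_union, hsF, hsH, Set.Finite.coe_toFinset,
      Set.Finite.coe_toFinset]
  have hTsum : totalWeight w T = ∑ e ∈ sTr, w e + ∑ e ∈ sH, w e := by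
    rw [my_totalWeight_eq_sum w T _ hTedge, Finset.sum_union hdisj1]
  have hT3sum : totalWeight w T3 = ∑ e ∈ sF, w e + ∑ e ∈ sH, w e := by
    rw [my_totalWeight_eq_sum w T3 _ hT3edge, Finset.sum_union hdisj2]
  have hTrsum : totalWeight w Tr = ∑ e ∈ sTr, w e :=
    my_totalWeight_eq_sum w Tr _ (hTrfin.coe_toFinset).symm
  have hFsum : totalWeight w F' = ∑ e ∈ sF, w e :=
    my_totalWeight_eq_sum w F' _ (hF'fin.coe_toFinset).symm
  rw [hTsum, hT3sum] at hmin
  rw [hTrsum, hFsum]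
  linarith
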